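/- arXiv:2004.14414 — 2 statements merged into one kernel-verified Lean document; each statement's English description precedes it below -/
import Mathlib

section
/- The action of SL(2,ℝ) × SL(2,ℝ) on M(2,ℝ) given by (A,B)·X = A X B^{-1} preserves the quadratic form q = -det, and the kernel of the induced homomorphism SL(2,ℝ) × SL(2,ℝ) → O(M(2,ℝ), q) is exactly {(I,I), (-I,-I)}. -/
instance : Fact (Even (Fintype.card (Fin 2))) := ⟨by simp⟩

/-- The action `(A,B)·X = A X B⁻¹` of `SL(2,ℝ) × SL(2,ℝ)` on `M(2,ℝ)` preserves the
quadratic form `q = -det`, and the kernel of the induced homomorphism to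
`O(M(2,ℝ), q)` is exactly `{(I,I), (-I,-I)}`. -/
theorem stmt4 :
    (∀ (A B : Matrix.SpecialLinearGroup (Fin 2) ℝ) (X : Matrix (Fin 2) (Fin 2) ℝ),
        -((A : Matrix (Fin 2) (Fin 2) ℝ) * X *
            ((B⁻¹ : Matrix.SpecialLinearGroup (Fin 2) ℝ) : Matrix (Fin 2) (Fin 2) ℝ)).det
          = -X.det) ∧
    {p : Matrix.SpecialLinearGroup (Fin 2) ℝ × Matrix.SpecialLinearGroup (Fin 2) ℝ |
        ∀ X : Matrix (Fin 2) (Fin 2) ℝ,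
          (p.1 : Matrix (Fin 2) (Fin 2) ℝ) * X *
            ((p.2⁻¹ : Matrix.SpecialLinearGroup (Fin 2) ℝ) : Matrix (Fin 2) (Fin 2) ℝ) = X}
      = {(1, 1), (-1, -1)} := by
  constructor
  · intro A B X
    rw [Matrix.det_mul, Matrix.det_mul, A.det_coe, (B⁻¹).det_coe]
    ring
  · ext ⟨A, B⟩
    simp only [Set.mem_setOf_eq, Set.mem_insert_iff, Set.mem_singleton_iff, Prod.mk.injEq]
    constructor
    · intro h
      -- A = B as matrices
      have hmul : (B : Matrix (Fin 2) (Fin 2) ℝ) * (B⁻¹ : Matrix.SpecialLinearGroup (Fin 2) ℝ) = 1 := by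
        rw [← Matrix.SpecialLinearGroup.coe_mul, mul_inv_cancel,
          Matrix.SpecialLinearGroup.coe_one]
      have hAB : (A : Matrix (Fin 2) (Fin 2) ℝ) = (B : Matrix (Fin 2) (Fin 2) ℝ) := by
        have := h (B : Matrix (Fin 2) (Fin 2) ℝ)
        rwa [mul_assoc, hmul, mul_one] at this
      -- A commutes with everything
      have hcomm : ∀ X : Matrix (Fin 2) (Fin 2) ℝ,
          (A : Matrix (Fin 2) (Fin 2) ℝ) * X = X * A := by
        intro X
        have := h X
        rw [hAB] at this ⊢
        calc (B : Matrix (Fin 2) (Fin 2) ℝ) * X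
            = ((B : Matrix (Fin 2) (Fin 2) ℝ) * X *
              (B⁻¹ : Matrix.SpecialLinearGroup (Fin 2) ℝ)) * B := by
              rw [mul_assoc, mul_assoc]
              rw [← Matrix.SpecialLinearGroup.coe_mul, inv_mul_cancel,
                Matrix.SpecialLinearGroup.coe_one, mul_one]
          _ = X * B := by rw [this]
      obtain ⟨r, hr⟩ := Matrix.mem_range_scalar_iff_commute_single'.mpr
        (fun i j => (hcomm _).symm)
      have hdet : (A : Matrix (Fin 2) (Fin 2) ℝ).det = 1 := A.det_coe
      rw [← hr, Matrix.scalar_apply, Matrix.det_diagonal] at hdet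
      simp only [Fin.prod_univ_two] at hdet
      have hr1 : r = 1 ∨ r = -1 := mul_self_eq_one_iff.mp hdet
      have hAmat : (A : Matrix (Fin 2) (Fin 2) ℝ) = r • (1 : Matrix (Fin 2) (Fin 2) ℝ) := by
        rw [← hr, Matrix.scalar_apply]
        ext i j
        simp [Matrix.diagonal_apply, Matrix.one_apply]
      rcases hr1 with h1 | h1 <;> subst h1
      · left
        have hA1 : A = 1 := Subtype.ext (by simp [hAmat])
        exact ⟨hA1, Subtype.ext (by rw [← hAB, hAmat]; simp)⟩
      · right
        have hA1 : A = -1 := Subtype.ext (by simp [hAmat])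
        exact ⟨hA1, Subtype.ext (by rw [← hAB, hAmat]; simp)⟩
    · rintro (⟨h1, h2⟩ | ⟨h1, h2⟩) <;> subst h1 <;> subst h2 <;> intro X <;>
        simp [Matrix.SpecialLinearGroup.coe_one]
end

section
/- Let φ : ℝP¹ → ℝP¹ be an orientation-preserving homeomorphism, and let φ₀ ∈ PSL(2,ℝ) be the unique element with φ₀⁻¹φ(0) = 1, φ₀⁻¹φ(1) = ∞, φ₀⁻¹φ(∞) = 0. Then φ₀⁻¹∘φ has no fixed point in ℝP¹; equivalently, the graph of φ in ℝP¹ × ℝP¹ is disjoint from the graph of φ₀. -/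
section Aux

variable {α : Type*} [CircularOrder α]

lemma sbtw_ne12 {a b c : α} (h : sbtw a b c) : a ≠ b := by
  rintro rfl; exact sbtw_irrefl_left h

lemma sbtw_ne23 {a b c : α} (h : sbtw a b c) : b ≠ c := by
  rintro rfl; exact sbtw_irrefl_right h

lemma sbtw_ne13 {a b c : α} (h : sbtw a b c) : a ≠ c := by
  rintro rfl; exact sbtw_irrefl_left_right h

/-- An sbtw-preserving bijection has sbtw-preserving inverse. -/
lemma symm_pres (e : α ≃ α) (he : ∀ a b c : α, sbtw a b c → sbtw (e a) (e b) (e c))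
    {a b c : α} (h : sbtw a b c) : sbtw (e.symm a) (e.symm b) (e.symm c) := by
  by_contra hn
  have hsb : sbtw (e.symm c) (e.symm b) (e.symm a) := by
    refine sbtw_of_btw_not_btw ?_ ?_
    · -- btw (e.symm c) (e.symm b) (e.symm a)
      by_contra hb
      have := btw_iff_not_sbtw.mp (btw_of_sbtw h)
      -- use totality
      rcases btw_total (e.symm c) (e.symm b) (e.symm a) with h' | h'
      · exact hb h'
      · -- btw (e.symm a) (e.symm b) (e.symm c), so sbtw since not btw reverse
        have hs : sbtw (e.symm a) (e.symm b) (e.symm c) :=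
          sbtw_of_btw_not_btw h' hb
        exact hn hs
    · -- ¬ btw (e.symm a) (e.symm b) (e.symm c)
      intro hb
      by_cases h' : btw (e.symm c) (e.symm b) (e.symm a)
      · rcases hb.antisymm h' with h'' | h'' | h''
        · exact sbtw_ne12 h (e.symm.injective h'')
        · exact sbtw_ne23 h (e.symm.injective h'')
        · exact sbtw_ne13 h (e.symm.injective h''.symm)
      · exact hn (sbtw_of_btw_not_btw hb h')
  have := he _ _ _ hsb
  simp only [Equiv.apply_symm_apply] at this
  exact sbtw_asymm h this

/-- The open arcs `(a,b)` and `(b,c)` are disjoint when `sbtw a b c`. -/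
lemma arcs_disjoint {a b c x : α} (habc : sbtw a b c) (h1 : sbtw a x b) (h2 : sbtw b x c) :
    False := by
  have hbax : sbtw b a x := sbtw_cyclic_right h1
  have hbca : sbtw b c a := sbtw_cyclic_left habc
  have hbcx : sbtw b c x := sbtw_trans_right hbca hbax
  have hxbc : sbtw x b c := sbtw_cyclic_right hbcx
  exact sbtw_asymm hxbc (sbtw_cyclic_right h2)

/-- If `b ∈ (a,c)` and `c ∈ (a,d)` then `c ∈ (b,d)`. -/
lemma sbtw_shift {a b c d : α} (h1 : sbtw a b c) (h2 : sbtw a c d) : sbtw b c d := by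
  have h1' : sbtw c a b := sbtw_cyclic_right h1
  have h2' : sbtw c d a := sbtw_cyclic_left h2
  have : sbtw c d b := sbtw_trans_right h2' h1'
  exact sbtw_cyclic_left (sbtw_cyclic_left this)

/-- Totality of sbtw for pairwise distinct triples. -/
lemma sbtw_total_of_ne {a b c : α} (hab : a ≠ b) (hbc : b ≠ c) (hca : c ≠ a) :
    sbtw a b c ∨ sbtw c b a := by
  rcases btw_total a b c with h | h
  · left
    refine sbtw_of_btw_not_btw h fun h' => ?_
    rcases h.antisymm h' with h'' | h'' | h''
    · exact hab h''
    · exact hbc h''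
    · exact hca h''
  · right
    refine sbtw_of_btw_not_btw h fun h' => ?_
    rcases h'.antisymm h with h'' | h'' | h''
    · exact hab h''
    · exact hbc h''
    · exact hca h''

end Aux

/-- Let `φ` be an orientation-preserving homeomorphism of the circle `ℝP¹` (formalized
as a bijection of a circularly ordered set preserving the strict betweenness relation),
and let `φ₀` be the orientation-preserving Möbius-type map with `φ₀⁻¹φ(0) = 1`,
`φ₀⁻¹φ(1) = ∞`, `φ₀⁻¹φ(∞) = 0` (for a positively oriented triple `0, 1, ∞`). Then
`φ₀⁻¹ ∘ φ` has no fixed point; equivalently the graph of `φ` is disjoint from the graph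
of `φ₀`. -/
theorem stmt16 {α : Type*} [CircularOrder α] (φ φ₀ : α ≃ α)
    (hφ : ∀ a b c : α, sbtw a b c → sbtw (φ a) (φ b) (φ c))
    (hφ₀ : ∀ a b c : α, sbtw a b c → sbtw (φ₀ a) (φ₀ b) (φ₀ c))
    (x0 x1 xinf : α) (hcyc : sbtw x0 x1 xinf)
    (h0 : φ x0 = φ₀ x1) (h1 : φ x1 = φ₀ xinf) (h2 : φ xinf = φ₀ x0) :
    (∀ x : α, φ₀.symm (φ x) ≠ x) ∧ ∀ x : α, φ x ≠ φ₀ x := by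
  set ψ : α → α := fun x => φ₀.symm (φ x) with hψdef
  have hψ : ∀ a b c : α, sbtw a b c → sbtw (ψ a) (ψ b) (ψ c) := fun a b c h =>
    symm_pres φ₀ hφ₀ (hφ a b c h)
  have e0 : ψ x0 = x1 := by simp [hψdef, h0]
  have e1 : ψ x1 = xinf := by simp [hψdef, h1]
  have e2 : ψ xinf = x0 := by simp [hψdef, h2]
  have main : ∀ x : α, ψ x ≠ x := by
    intro x hx
    rcases eq_or_ne x x0 with rfl | hne0
    · exact sbtw_ne12 hcyc (e0 ▸ hx).symm
    rcases eq_or_ne x x1 with rfl | hne1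
    · exact sbtw_ne23 hcyc (e1 ▸ hx).symm
    rcases eq_or_ne x xinf with rfl | hne2
    · exact sbtw_ne13 hcyc (e2 ▸ hx)
    -- trichotomy: x is in one of the three open arcs
    have harc : sbtw x0 x x1 ∨ sbtw x1 x xinf ∨ sbtw xinf x x0 := by
      rcases sbtw_total_of_ne (Ne.symm hne0) hne1 (sbtw_ne12 hcyc).symm with h | h
      · exact Or.inl h
      · -- sbtw x1 x x0
        rcases sbtw_total_of_ne (Ne.symm hne1) hne2 (sbtw_ne23 hcyc).symm with h' | h'
        · exact Or.inr (Or.inl h')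
        · -- sbtw xinf x x1 and sbtw x1 x x0 imply sbtw xinf x x0
          have hx1infx : sbtw x1 xinf x := sbtw_cyclic_right h'
          exact Or.inr (Or.inr (sbtw_shift hx1infx h))
    rcases harc with h | h | h
    · have h' : sbtw x1 x xinf := by
        have := hψ _ _ _ h
        rwa [e0, e1, hx] at this
      exact arcs_disjoint hcyc h h'
    · have h' : sbtw xinf x x0 := by
        have := hψ _ _ _ h
        rwa [e1, e2, hx] at this
      exact arcs_disjoint (sbtw_cyclic_left hcyc) h h'
    · have h' : sbtw x0 x x1 := by
        have := hψ _ _ _ h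
        rwa [e2, e0, hx] at this
      exact arcs_disjoint (sbtw_cyclic_right hcyc) h h'
  refine ⟨main, fun x hx => main x ?_⟩
  simp [hψdef, hx]
end
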